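/- arXiv:1605.01473 — 4 statements merged into one kernel-verified Lean document; each statement's English description precedes it below -/
import Mathlib

section
/- Let m, d, k be natural numbers and let U₀, U₁, …, U_k be subspaces of ℂ^m such that dim(U_i) = d for every 0 ≤ i ≤ k and dim(U_i ⊓ U_{i+1}) + m ≥ 3d for every 0 ≤ i < k. Then dim(U₀ ⊓ U_k) + k·m ≥ (2k+1)·d. -/
open Module

lemma aux_inter (m : ℕ) (A B C : Submodule ℂ (Fin m → ℂ)) :
    finrank ℂ ↥(A ⊓ C) + finrank ℂ ↥B ≥ finrank ℂ ↥(A ⊓ B) + finrank ℂ ↥(B ⊓ C) := by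
  have h1 : finrank ℂ ↥((A ⊓ B) ⊔ (B ⊓ C)) + finrank ℂ ↥((A ⊓ B) ⊓ (B ⊓ C))
      = finrank ℂ ↥(A ⊓ B) + finrank ℂ ↥(B ⊓ C) :=
    Submodule.finrank_sup_add_finrank_inf_eq _ _
  have h2 : finrank ℂ ↥((A ⊓ B) ⊔ (B ⊓ C)) ≤ finrank ℂ ↥B :=
    Submodule.finrank_mono (sup_le inf_le_right inf_le_left)
  have h3 : finrank ℂ ↥((A ⊓ B) ⊓ (B ⊓ C)) ≤ finrank ℂ ↥(A ⊓ C) :=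
    Submodule.finrank_mono (le_inf (le_trans inf_le_left inf_le_left)
      (le_trans inf_le_right inf_le_right))
  omega

theorem stmt3 (m d k : ℕ) (U : Fin (k + 1) → Submodule ℂ (Fin m → ℂ))
    (hdim : ∀ i, finrank ℂ ↥(U i) = d)
    (hcons : ∀ i : Fin k, finrank ℂ ↥(U i.castSucc ⊓ U i.succ) + m ≥ 3 * d) :
    finrank ℂ ↥(U 0 ⊓ U (Fin.last k)) + k * m ≥ (2 * k + 1) * d := by
  induction k with
  | zero =>
      have h00 : Fin.last 0 = 0 := rfl
      rw [h00]
      have : (U 0 ⊓ U 0) = U 0 := inf_idem _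
      rw [this, hdim]
      omega
  | succ k ih =>
      have IH := ih (U ∘ Fin.castSucc) (fun i => hdim _)
        (fun i => by
          have := hcons i.castSucc
          simpa only [Function.comp, Fin.succ_castSucc] using this)
      have hlast := hcons (Fin.last k)
      have key := aux_inter m (U 0) (U ((Fin.last k).castSucc)) (U (Fin.last (k+1)))
      rw [hdim] at key
      have h0 : (U ∘ Fin.castSucc) 0 = U 0 := by
        simp [Fin.castSucc_zero]
      have hl : (U ∘ Fin.castSucc) (Fin.last k) = U ((Fin.last k).castSucc) := rfl
      rw [h0, hl] at IH
      have hsucc : (Fin.last k).succ = Fin.last (k+1) := by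
        simp [Fin.succ_last]
      rw [hsucc] at hlast
      have hd : d ≤ m := by
        have := hdim 0
        have hle : finrank ℂ ↥(U 0) ≤ finrank ℂ (Fin m → ℂ) :=
          Submodule.finrank_le _
        simp [finrank_fintype_fun_eq_card] at hle
        omega
      have : finrank ℂ ↥(U 0 ⊓ U (Fin.last (k+1))) + d
          ≥ finrank ℂ ↥(U 0 ⊓ U ((Fin.last k).castSucc))
            + finrank ℂ ↥(U ((Fin.last k).castSucc) ⊓ U (Fin.last (k+1))) := key
      have goal := this
      nlinarith [IH, hlast, goal]
end

section
/- Let m, d be natural numbers, let Δ ≥ 1 be a natural number, and let U₀, U₁, …, U_Δ and Z be subspaces of ℂ^m, each of dimension d. Assume (i) dim(U_i ⊓ U_{i+1}) + m ≥ 3d for every 0 ≤ i < Δ, and (ii) dim(U_Δ ⊓ Z) + m ≥ dim(U₀ ⊓ U_Δ ⊓ Z) + 3d. Then (2Δ+3)·d ≤ (Δ+1)·m. -/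
open Module

lemma key_three (m : ℕ) (A B C : Submodule ℂ (Fin m → ℂ)) :
    finrank ℂ ↥(A ⊓ B) + finrank ℂ ↥(B ⊓ C) ≤
      finrank ℂ ↥B + finrank ℂ ↥(A ⊓ B ⊓ C) := by
  have h := Submodule.finrank_sup_add_finrank_inf_eq (A ⊓ B) (B ⊓ C)
  have h1 : finrank ℂ ↥((A ⊓ B) ⊔ (B ⊓ C)) ≤ finrank ℂ ↥B :=
    Submodule.finrank_mono (sup_le inf_le_right inf_le_left)
  have h2 : (A ⊓ B) ⊓ (B ⊓ C) = A ⊓ B ⊓ C := by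
    ext x; simp only [Submodule.mem_inf]; tauto
  rw [h2] at h
  omega

theorem stmt4 (m d Δ : ℕ) (hΔ : 1 ≤ Δ)
    (U : Fin (Δ + 1) → Submodule ℂ (Fin m → ℂ)) (Z : Submodule ℂ (Fin m → ℂ))
    (hdimU : ∀ i, finrank ℂ ↥(U i) = d) (hdimZ : finrank ℂ ↥Z = d)
    (hcons : ∀ i : Fin Δ, finrank ℂ ↥(U i.castSucc ⊓ U i.succ) + m ≥ 3 * d)
    (hZ : finrank ℂ ↥(U (Fin.last Δ) ⊓ Z) + m ≥
      finrank ℂ ↥(U 0 ⊓ U (Fin.last Δ) ⊓ Z) + 3 * d) :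
    (2 * Δ + 3) * d ≤ (Δ + 1) * m := by
  -- reindex by ℕ to avoid Fin proof-term mismatches
  set V : ℕ → Submodule ℂ (Fin m → ℂ) :=
    fun i => U ⟨min i Δ, Nat.lt_succ_of_le (Nat.min_le_right i Δ)⟩ with hV
  have hVU : ∀ (i : ℕ) (h : i ≤ Δ), V i = U ⟨i, Nat.lt_succ_of_le h⟩ := by
    intro i h
    simp only [hV]
    congr 1
    exact Fin.ext (by simp [Nat.min_eq_left h])
  have hVdim : ∀ i : ℕ, finrank ℂ ↥(V i) = d := fun i => hdimU _
  have hVcons : ∀ i : ℕ, i < Δ → finrank ℂ ↥(V i ⊓ V (i + 1)) + m ≥ 3 * d := by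
    intro i hi
    have := hcons ⟨i, hi⟩
    have e1 : (Fin.castSucc ⟨i, hi⟩ : Fin (Δ + 1)) = ⟨i, Nat.lt_succ_of_le hi.le⟩ :=
      Fin.ext rfl
    have e2 : (Fin.succ ⟨i, hi⟩ : Fin (Δ + 1)) = ⟨i + 1, Nat.lt_succ_of_le hi⟩ :=
      Fin.ext rfl
    rw [e1, e2] at this
    rwa [hVU i hi.le, hVU (i + 1) hi]
  have hV0 : V 0 = U 0 := by
    rw [hVU 0 (Nat.zero_le Δ)]; congr 1
  have hVlast : V Δ = U (Fin.last Δ) := by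
    rw [hVU Δ le_rfl]; congr 1
  -- main chain bound
  have main : ∀ i : ℕ, i ≤ Δ →
      (2 * i + 1) * d ≤ finrank ℂ ↥(V 0 ⊓ V i) + i * m := by
    intro i
    induction i with
    | zero =>
      intro _
      rw [inf_idem, hVdim]
      omega
    | succ i ih =>
      intro h
      have ih' := ih (by omega)
      have hstep := hVcons i (by omega)
      have hk := key_three m (V 0) (V i) (V (i + 1))
      have hmono : finrank ℂ ↥(V 0 ⊓ V i ⊓ V (i + 1)) ≤
          finrank ℂ ↥(V 0 ⊓ V (i + 1)) :=
        Submodule.finrank_mono (le_inf (inf_le_left.trans inf_le_left) inf_le_right)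
      have hd := hVdim i
      nlinarith [ih', hstep, hk, hmono, hd]
  have hmain := main Δ le_rfl
  rw [← hV0, ← hVlast] at hZ
  have hk := key_three m (V 0) (V Δ) Z
  have hd := hVdim Δ
  nlinarith [hmain, hZ, hk, hd]
end

section
/- Let m, n, p be positive integers with n < m, let l : Fin m → Fin p be a map, let v ∈ ℂ^m, and let V be an m×n complex matrix. For a ∈ ℂ^p, let D_a denote the m×m diagonal matrix whose t-th diagonal entry is a(l(t)). If v does not lie in the column span of V, then the set {(a, b) ∈ ℂ^p × ℂ^p : D_a v lies in the column span of D_b V} has Lebesgue measure zero in ℂ^p × ℂ^p. -/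
open Matrix MeasureTheory
open MvPolynomial Polynomial


/-- The column span of an `m × n` complex matrix: the range of `x ↦ M x`. -/
noncomputable def colSpan {m n : ℕ} (M : Matrix (Fin m) (Fin n) ℂ) :
    Submodule ℂ (Fin m → ℂ) :=
  LinearMap.range M.mulVecLin

/-- The `m × m` diagonal matrix whose `t`-th diagonal entry is `a (l t)`. -/
def patDiag {m p : ℕ} (l : Fin m → Fin p) (a : Fin p → ℂ) :
    Matrix (Fin m) (Fin m) ℂ :=
  Matrix.diagonal (a ∘ l)

lemma meas_eval {σ : Type*} [MeasurableSpace (σ → ℂ)]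
    (h : ∀ i : σ, Measurable fun x : σ → ℂ => x i) (P : MvPolynomial σ ℂ) :
    Measurable fun x : σ → ℂ => MvPolynomial.eval x P := by
  classical
  apply P.induction_on
  · intro a; simp
  · intro p q hp hq; simpa [Pi.add_def] using hp.add hq
  · intro p i hp; simpa [Pi.mul_def] using hp.mul (h i)

lemma poly_null : ∀ (k : ℕ) (P : MvPolynomial (Fin k) ℂ), P ≠ 0 →
    volume {x : Fin k → ℂ | MvPolynomial.eval x P = 0} = 0 := by
  intro k
  induction k with
  | zero =>
    intro P hP
    obtain ⟨c, rfl⟩ := MvPolynomial.C_surjective (Fin 0) P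
    have hc : c ≠ 0 := fun h => hP (by simp [h])
    convert measure_empty
    · ext x; simp [hc]
    · infer_instance
  | succ k ih =>
    intro P hP
    set Q := MvPolynomial.finSuccEquiv ℂ k P with hQ
    have hQ0 : Q ≠ 0 := fun h => hP <| by
      have := congrArg (MvPolynomial.finSuccEquiv ℂ k).symm h
      simpa [hQ] using this
    have hlead : Q.leadingCoeff ≠ 0 := Polynomial.leadingCoeff_ne_zero.mpr hQ0
    -- the bad set of "rest" variables
    set N : Set (Fin k → ℂ) := {x | MvPolynomial.eval x Q.leadingCoeff = 0} with hN
    have hNnull : volume N = 0 := ih _ hlead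
    -- the set in ℂ × (Fin k → ℂ)
    set S : Set ((Fin k → ℂ) × ℂ) :=
      {yx | MvPolynomial.eval (Fin.cons yx.2 yx.1) P = 0} with hS
    have hSm : MeasurableSet S := by
      have : Measurable fun yx : (Fin k → ℂ) × ℂ => MvPolynomial.eval (Fin.cons yx.2 yx.1) P := by
        apply (meas_eval (fun i => measurable_pi_apply i) P).comp
        apply measurable_pi_lambda
        intro i
        refine Fin.cases ?_ ?_ i
        · exact measurable_snd
        · intro j; exact (measurable_pi_apply j).comp measurable_fst
      exact this (measurableSet_singleton 0)
    have hSnull : (volume : Measure ((Fin k → ℂ) × ℂ)) S = 0 := by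
      have : (volume : Measure ((Fin k → ℂ) × ℂ)) = Measure.prod volume volume := rfl
      rw [this, MeasureTheory.Measure.measure_prod_null hSm]
      have hae : ∀ᵐ x : Fin k → ℂ, x ∉ N := by
        rw [MeasureTheory.ae_iff]; simpa [not_not] using hNnull
      filter_upwards [hae] with x hx
      rw [Pi.zero_apply]
      have hpx : (Q.map (MvPolynomial.eval x)) ≠ 0 := fun h => hx <| by
        have := congrArg (fun q => Polynomial.coeff q Q.natDegree) h
        simp only [Polynomial.coeff_map, Polynomial.coeff_zero] at this
        simp only [hN, Set.mem_setOf_eq, Polynomial.leadingCoeff]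
        exact this
      have : (Prod.mk x ⁻¹' S) ⊆ {y | Polynomial.IsRoot (Q.map (MvPolynomial.eval x)) y} := by
        intro y hy
        have := hy
        simp only [hS, Set.mem_preimage, Set.mem_setOf_eq] at this ⊢
        rwa [MvPolynomial.eval_eq_eval_mv_eval'] at this
      exact measure_mono_null this ((Polynomial.finite_setOf_isRoot hpx).measure_zero _)
    -- transfer via the measurable equiv
    have hmp := (MeasureTheory.volume_preserving_piFinSuccAbove (fun _ : Fin (k+1) => ℂ) 0)
    set e := MeasurableEquiv.piFinSuccAbove (fun _ : Fin (k+1) => ℂ) 0 with he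
    have hset : {z : Fin (k+1) → ℂ | MvPolynomial.eval z P = 0}
        = e ⁻¹' (Prod.swap ⁻¹' S) := by
      ext z
      simp only [hS, he, Set.mem_preimage, Set.mem_setOf_eq, MeasurableEquiv.piFinSuccAbove_apply,
        Prod.swap, Fin.insertNthEquiv_zero]
      have hz : Fin.cons ((Fin.consEquiv fun _ : Fin (k+1) => ℂ).symm z).1
          ((Fin.consEquiv fun _ : Fin (k+1) => ℂ).symm z).2 = z := by
        simp [Fin.consEquiv]
      rw [hz]
    rw [hset]
    have hswapS : MeasurableSet (Prod.swap ⁻¹' S) := hSm.preimage measurable_swap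
    rw [hmp.measure_preimage hswapS.nullMeasurableSet]
    have := (MeasureTheory.Measure.measurePreserving_swap
      (μ := (volume : Measure ℂ)) (ν := (volume : Measure (Fin k → ℂ)))).measure_preimage
      hSm.nullMeasurableSet
    calc (volume : Measure (ℂ × (Fin k → ℂ))) (Prod.swap ⁻¹' S)
        = ((volume : Measure ℂ).prod volume) (Prod.swap ⁻¹' S) := rfl
      _ = ((volume : Measure (Fin k → ℂ)).prod volume) S := this
      _ = 0 := hSnull


lemma poly_null_fintype {σ : Type*} [Fintype σ] (P : MvPolynomial σ ℂ) (hP : P ≠ 0) :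
    volume {x : σ → ℂ | MvPolynomial.eval x P = 0} = 0 := by
  classical
  set e := Fintype.equivFin σ with he
  set g := (MeasurableEquiv.piCongrLeft (fun _ : Fin (Fintype.card σ) => ℂ) e).symm with hg
  have hmp : MeasurePreserving g volume volume :=
    (MeasureTheory.volume_measurePreserving_piCongrLeft (fun _ => ℂ) e).symm
  have key : g ⁻¹' {x : σ → ℂ | MvPolynomial.eval x P = 0}
      = {y : Fin (Fintype.card σ) → ℂ | MvPolynomial.eval y (MvPolynomial.rename e P) = 0} := by
    ext y
    simp only [Set.mem_preimage, Set.mem_setOf_eq, MvPolynomial.eval_rename]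
    have : g y = y ∘ e := by
      funext i
      simp [hg, MeasurableEquiv.piCongrLeft, Equiv.piCongrLeft]
    rw [this]
  have hmeas : MeasurableSet {x : σ → ℂ | MvPolynomial.eval x P = 0} :=
    (meas_eval (fun i => measurable_pi_apply i) P) (measurableSet_singleton 0)
  have := hmp.measure_preimage hmeas.nullMeasurableSet
  rw [key] at this
  rw [← this]
  exact poly_null _ _ (fun h => hP (MvPolynomial.rename_injective _ e.injective
    (by rw [h, map_zero])))

lemma poly_null_prod {p q : ℕ} (P : MvPolynomial (Fin p ⊕ Fin q) ℂ) (hP : P ≠ 0) :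
    volume {ab : (Fin p → ℂ) × (Fin q → ℂ) |
      MvPolynomial.eval (Sum.elim ab.1 ab.2) P = 0} = 0 := by
  set g := (MeasurableEquiv.sumPiEquivProdPi (fun _ : Fin p ⊕ Fin q => ℂ)).symm with hg
  have hmp : MeasurePreserving g volume volume :=
    MeasureTheory.volume_measurePreserving_sumPiEquivProdPi_symm _
  have key : {ab : (Fin p → ℂ) × (Fin q → ℂ) | MvPolynomial.eval (Sum.elim ab.1 ab.2) P = 0}
      = g ⁻¹' {x : Fin p ⊕ Fin q → ℂ | MvPolynomial.eval x P = 0} := by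
    ext ab
    simp only [Set.mem_preimage, Set.mem_setOf_eq]
    have : g ab = Sum.elim ab.1 ab.2 := by
      funext s
      cases s <;> rfl
    rw [this]
  rw [key]
  have hmeas : MeasurableSet {x : Fin p ⊕ Fin q → ℂ | MvPolynomial.eval x P = 0} :=
    (meas_eval (fun i => measurable_pi_apply i) P) (measurableSet_singleton 0)
  rw [hmp.measure_preimage hmeas.nullMeasurableSet]
  exact poly_null_fintype P hP

theorem stmt5 (m n p : ℕ) (hm : 0 < m) (hn : 0 < n) (hp : 0 < p) (hnm : n < m)
    (l : Fin m → Fin p) (v : Fin m → ℂ) (V : Matrix (Fin m) (Fin n) ℂ)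
    (hv : v ∉ colSpan V) :
    volume {ab : (Fin p → ℂ) × (Fin p → ℂ) |
      (patDiag l ab.1).mulVec v ∈ colSpan (patDiag l ab.2 * V)} = 0 := by
  classical
  set r := Module.finrank ℂ ↥(colSpan V) with hr
  set u : Fin r → (Fin m → ℂ) := fun j => ((Module.finBasis ℂ ↥(colSpan V)) j : Fin m → ℂ)
    with hu
  have hspan : Submodule.span ℂ (Set.range u) = colSpan V := by
    have h1 : Set.range u
        = (colSpan V).subtype '' Set.range (Module.finBasis ℂ ↥(colSpan V)) := by
      rw [← Set.range_comp]; rfl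
    rw [h1, Submodule.span_image, Module.Basis.span_eq, Submodule.map_subtype_top]
  have hui : LinearIndependent ℂ u :=
    ((Module.finBasis ℂ ↥(colSpan V)).linearIndependent).map' (colSpan V).subtype
      (Submodule.ker_subtype _)
  set w : Fin (r+1) → Fin m → ℂ := Fin.snoc u v with hw
  have hwi : LinearIndependent ℂ w :=
    linearIndependent_fin_snoc.mpr ⟨hui, by rw [hspan]; exact hv⟩
  set B : Matrix (Fin m) (Fin (r+1)) ℂ := (Matrix.of w)ᵀ with hB
  have colsum : ∀ (q : ℕ) (c : Fin q → Fin m → ℂ) (x : Fin q → ℂ),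
      (Matrix.of c)ᵀ *ᵥ x = ∑ j, x j • c j := by
    intro q c x
    ext i
    simp [Matrix.mulVec, dotProduct, Finset.sum_apply, mul_comm]
  have hBker : ∀ x, B *ᵥ x = 0 → x = 0 := by
    intro x hx
    rw [hB, colsum] at hx
    exact funext fun j => (Fintype.linearIndependent_iff.mp hwi) x hx j
  open scoped ComplexOrder in
  have hdetB : (Bᴴ * B).det ≠ 0 := by
    have hinj : Function.Injective ((Bᴴ * B).mulVec) := by
      have hker : ∀ x, (Bᴴ * B) *ᵥ x = 0 → x = 0 := by
        intro x hx
        have h1 : star x ⬝ᵥ ((Bᴴ * B) *ᵥ x) = 0 := by rw [hx]; simp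
        rw [← Matrix.mulVec_mulVec, Matrix.dotProduct_mulVec, ← Matrix.star_mulVec] at h1
        exact hBker x (dotProduct_star_self_eq_zero.mp h1)
      intro x y hxy
      exact sub_eq_zero.mp (hker (x - y) (by rw [Matrix.mulVec_sub, hxy, sub_self]))
    exact ((Matrix.isUnit_iff_isUnit_det _).mp
      (Matrix.mulVec_injective_iff_isUnit.mp hinj)).ne_zero
  set colF : (Fin p → ℂ) → (Fin p → ℂ) → Fin (r+1) → (Fin m → ℂ) := fun a b =>
    Fin.snoc (fun j => (patDiag l b) *ᵥ (u j)) ((patDiag l a) *ᵥ v) with hcolF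
  set Cm : (Fin p → ℂ) → (Fin p → ℂ) → Matrix (Fin m) (Fin (r+1)) ℂ := fun a b =>
    (Matrix.of (colF a b))ᵀ with hCm
  have hpat1 : patDiag l (1 : Fin p → ℂ) = 1 := by
    unfold patDiag
    rw [← Matrix.diagonal_one]
    rfl
  have hcol11 : colF 1 1 = w := by
    funext j
    rw [hcolF]
    simp only [hpat1, Matrix.one_mulVec]
    rfl
  have hC11 : Cm 1 1 = B := by
    show (Matrix.of (colF 1 1))ᵀ = B
    rw [hcol11, hB]
  have hvanish : ∀ a b : Fin p → ℂ,
      (patDiag l a) *ᵥ v ∈ colSpan (patDiag l b * V) → (Bᴴ * Cm a b).det = 0 := by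
    intro a b hmem
    have h1 : colSpan (patDiag l b * V)
        = Submodule.span ℂ (Set.range fun j => (patDiag l b) *ᵥ (u j)) := by
      show LinearMap.range _ = _
      rw [Matrix.mulVecLin_mul, LinearMap.range_comp]
      show Submodule.map _ (colSpan V) = _
      rw [← hspan, Submodule.map_span, ← Set.range_comp]
      rfl
    rw [h1] at hmem
    obtain ⟨c, hc⟩ := (Submodule.mem_span_range_iff_exists_fun ℂ).mp hmem
    set x : Fin (r+1) → ℂ := Fin.snoc c (-1) with hx
    have hx0 : Cm a b *ᵥ x = 0 := by
      rw [hCm, colsum, Fin.sum_univ_castSucc]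
      simp only [hx, hcolF, Fin.snoc_castSucc, Fin.snoc_last]
      rw [hc]
      simp
    have hxne : x ≠ 0 := by
      intro h
      have := congrFun h (Fin.last r)
      rw [hx] at this
      simp at this
    by_contra hdet
    have hinj := Matrix.mulVec_injective_iff_isUnit.mpr
      ((Matrix.isUnit_iff_isUnit_det _).mpr (Ne.isUnit hdet))
    have h2 : (Bᴴ * Cm a b) *ᵥ x = (Bᴴ * Cm a b) *ᵥ 0 := by
      rw [← Matrix.mulVec_mulVec, hx0, Matrix.mulVec_zero, Matrix.mulVec_zero]
    exact hxne (hinj h2)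
  set pc : Fin (r+1) → Fin m → MvPolynomial (Fin p ⊕ Fin p) ℂ :=
    Fin.snoc (fun j i => MvPolynomial.C (u j i) * MvPolynomial.X (Sum.inr (l i)))
      (fun i => MvPolynomial.C (v i) * MvPolynomial.X (Sum.inl (l i))) with hpc
  set P : MvPolynomial (Fin p ⊕ Fin p) ℂ :=
    (@HMul.hMul _ _ (Matrix (Fin (r+1)) (Fin (r+1)) (MvPolynomial (Fin p ⊕ Fin p) ℂ))
      Matrix.instHMulOfFintypeOfMulOfAddCommMonoid
      (Bᴴ.map MvPolynomial.C) (Matrix.of pc)ᵀ).det with hP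
  have heval : ∀ a b : Fin p → ℂ,
      MvPolynomial.eval (Sum.elim a b) P = (Bᴴ * Cm a b).det := by
    intro a b
    rw [hP, RingHom.map_det, RingHom.mapMatrix_apply]
    congr 1
    rw [Matrix.map_mul]
    congr 1
    · ext i j
      simp
    · ext i j
      rw [hCm]
      simp only [Matrix.map_apply, Matrix.transpose_apply, Matrix.of_apply]
      refine Fin.lastCases ?_ ?_ j
      · simp [hpc, hcolF, patDiag, Matrix.mulVec_diagonal, mul_comm]
      · intro j'
        simp [hpc, hcolF, patDiag, Matrix.mulVec_diagonal, mul_comm]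
  have hPne : P ≠ 0 := by
    intro h
    apply hdetB
    have h11 := heval 1 1
    rw [h, map_zero, hC11] at h11
    exact h11.symm
  refine measure_mono_null ?_ (poly_null_prod P hPne)
  intro ab hab
  simp only [Set.mem_setOf_eq] at hab ⊢
  rw [heval]
  exact hvanish _ _ hab
end

section
/- Let m, n₁, n₂, p be positive integers, let l : Fin m → Fin p be a map, and let V₁ and V₂ be m×n₁ and m×n₂ complex matrices. For a ∈ ℂ^p, let D_a denote the m×m diagonal matrix whose t-th diagonal entry is a(l(t)). If the set {(a, b) ∈ ℂ^p × ℂ^p : the column span of D_a V₁ is contained in the column span of D_b V₂} has positive Lebesgue measure, then the column span of V₁ is contained in the column span of V₂. -/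
open Matrix MeasureTheory MvPolynomial

/-- The zero set of a nonzero multivariate polynomial over `ℂ` has Lebesgue measure zero. -/
lemma mvpoly_zeroset_volume_zero :
    ∀ (d : ℕ) (f : MvPolynomial (Fin d) ℂ), f ≠ 0 →
      volume {x : Fin d → ℂ | eval x f = 0} = 0 := by
  intro d
  induction d with
  | zero =>
    intro f hf
    obtain ⟨c, rfl⟩ := MvPolynomial.C_surjective (Fin 0) f
    have hc : c ≠ 0 := fun h => hf (by rw [h, map_zero])
    have : {x : Fin 0 → ℂ | eval x (C c) = 0} = ∅ := by
      ext x; simp [hc]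
    rw [this]; exact measure_empty
  | succ d ih =>
    intro f hf
    set q := finSuccEquiv ℂ d f with hqdef
    have hq0 : q ≠ 0 := by
      intro h
      apply hf
      have := congrArg (finSuccEquiv ℂ d).symm (hqdef ▸ h)
      simpa using this
    -- the swapped product set
    set T : Set ((Fin d → ℂ) × ℂ) :=
      {sy | eval (Fin.cons sy.2 sy.1) f = 0} with hT
    have hTcont : Continuous fun sy : (Fin d → ℂ) × ℂ => eval (Fin.cons sy.2 sy.1) f := by
      apply (MvPolynomial.continuous_eval f).comp
      apply continuous_pi
      intro i
      refine Fin.cases ?_ ?_ i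
      · exact continuous_snd
      · intro j
        exact (continuous_apply j).comp continuous_fst
    have hTmeas : MeasurableSet T :=
      (isClosed_singleton.preimage hTcont).measurableSet
    -- measure preserving map
    have mp1 : MeasurePreserving
        (MeasurableEquiv.piFinSuccAbove (fun _ : Fin (d+1) => ℂ) 0) volume volume :=
      volume_preserving_piFinSuccAbove (fun _ : Fin (d+1) => ℂ) 0
    have mp2 : MeasurePreserving (Prod.swap : ℂ × (Fin d → ℂ) → (Fin d → ℂ) × ℂ)
        volume volume := by
      rw [show (volume : Measure (ℂ × (Fin d → ℂ))) = Measure.prod volume volume from rfl,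
        show (volume : Measure ((Fin d → ℂ) × ℂ)) = Measure.prod volume volume from rfl]
      exact Measure.measurePreserving_swap
    have mp3 := mp2.comp mp1
    have hpre : (fun x => Prod.swap ((MeasurableEquiv.piFinSuccAbove
        (fun _ : Fin (d+1) => ℂ) 0) x)) ⁻¹' T = {x : Fin (d+1) → ℂ | eval x f = 0} := by
      ext x
      simp only [Set.mem_preimage, hT, Set.mem_setOf_eq]
      have hx : (MeasurableEquiv.piFinSuccAbove (fun _ : Fin (d+1) => ℂ) 0) x
          = (x 0, Fin.tail x) := rfl
      rw [hx]
      simp only [Prod.swap]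
      rw [Fin.cons_self_tail]
    have key : volume T = 0 := by
      rw [show (volume : Measure ((Fin d → ℂ) × ℂ)) = Measure.prod volume volume from rfl,
        Measure.measure_prod_null hTmeas]
      have hlc : q.leadingCoeff ≠ 0 := Polynomial.leadingCoeff_ne_zero.mpr hq0
      have hae : ∀ᵐ s : Fin d → ℂ, eval s q.leadingCoeff ≠ 0 := by
        rw [ae_iff]
        simp only [not_not]
        exact ih q.leadingCoeff hlc
      filter_upwards [hae] with s hs
      have hps : Polynomial.map (eval s) q ≠ 0 := by
        intro h
        apply hs
        have h2 : (Polynomial.map (eval s) q).coeff q.natDegree = 0 := by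
          rw [h]; simp
        rw [Polynomial.coeff_map] at h2
        exact h2
      have hfin : Set.Finite {y : ℂ | eval (Fin.cons y s) f = 0} := by
        have : {y : ℂ | eval (Fin.cons y s) f = 0}
            ⊆ {y : ℂ | (Polynomial.map (eval s) q).IsRoot y} := by
          intro y hy
          simp only [Set.mem_setOf_eq, Polynomial.IsRoot]
          rw [← MvPolynomial.eval_eq_eval_mv_eval']
          exact hy
        exact (Polynomial.finite_setOf_isRoot hps).subset this
      have : (Prod.mk s ⁻¹' T) = {y : ℂ | eval (Fin.cons y s) f = 0} := rfl
      rw [this]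
      exact hfin.measure_zero volume
    calc volume {x : Fin (d+1) → ℂ | eval x f = 0}
        = volume ((fun x => Prod.swap ((MeasurableEquiv.piFinSuccAbove
            (fun _ : Fin (d+1) => ℂ) 0) x)) ⁻¹' T) := by rw [hpre]
      _ = volume T := mp3.measure_preimage hTmeas.nullMeasurableSet
      _ = 0 := key

/-- Product-space version over a sum index type. -/
lemma mvpoly_zeroset_volume_zero' (p : ℕ) (f : MvPolynomial (Fin p ⊕ Fin p) ℂ) (hf : f ≠ 0) :
    volume {ab : (Fin p → ℂ) × (Fin p → ℂ) | eval (Sum.elim ab.1 ab.2) f = 0} = 0 := by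
  set S := {ab : (Fin p → ℂ) × (Fin p → ℂ) | eval (Sum.elim ab.1 ab.2) f = 0} with hS
  have hcont : Continuous fun ab : (Fin p → ℂ) × (Fin p → ℂ) =>
      eval (Sum.elim ab.1 ab.2) f := by
    apply (MvPolynomial.continuous_eval f).comp
    apply continuous_pi
    rintro (i | i)
    · exact (continuous_apply i).comp continuous_fst
    · exact (continuous_apply i).comp continuous_snd
  have hSmeas : MeasurableSet S := (isClosed_singleton.preimage hcont).measurableSet
  have mp1 : MeasurePreserving
      (MeasurableEquiv.sumPiEquivProdPi (fun _ : Fin p ⊕ Fin p => ℂ)) volume volume :=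
    volume_measurePreserving_sumPiEquivProdPi _
  have mp2 : MeasurePreserving
      (MeasurableEquiv.piCongrLeft (fun _ : Fin p ⊕ Fin p => ℂ) finSumFinEquiv.symm)
      volume volume := volume_measurePreserving_piCongrLeft _ _
  have mp3 := mp1.comp mp2
  have hren : (rename finSumFinEquiv) f ≠ 0 := by
    intro h
    exact hf ((MvPolynomial.rename_injective _ finSumFinEquiv.injective)
      (by simpa using h))
  have hpre : ((MeasurableEquiv.sumPiEquivProdPi (fun _ : Fin p ⊕ Fin p => ℂ)) ∘
        (MeasurableEquiv.piCongrLeft (fun _ : Fin p ⊕ Fin p => ℂ) finSumFinEquiv.symm))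
        ⁻¹' S = {x : Fin (p + p) → ℂ | eval x ((rename finSumFinEquiv) f) = 0} := by
    ext x
    simp only [Set.mem_preimage, hS, Set.mem_setOf_eq, Function.comp_apply]
    rw [MvPolynomial.eval_rename]
    have harg : Sum.elim
        ((MeasurableEquiv.sumPiEquivProdPi (fun _ : Fin p ⊕ Fin p => ℂ))
          ((MeasurableEquiv.piCongrLeft (fun _ : Fin p ⊕ Fin p => ℂ) finSumFinEquiv.symm) x)).1
        ((MeasurableEquiv.sumPiEquivProdPi (fun _ : Fin p ⊕ Fin p => ℂ))
          ((MeasurableEquiv.piCongrLeft (fun _ : Fin p ⊕ Fin p => ℂ) finSumFinEquiv.symm) x)).2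
        = x ∘ finSumFinEquiv := by
      funext i
      rcases i with i | i <;>
        simp [MeasurableEquiv.sumPiEquivProdPi, Equiv.sumPiEquivProdPi,
          MeasurableEquiv.piCongrLeft, Equiv.piCongrLeft, Equiv.piCongrLeft']
    rw [harg]
  have := mp3.measure_preimage hSmeas.nullMeasurableSet
  rw [hpre] at this
  rw [← this]
  exact mvpoly_zeroset_volume_zero (p + p) _ hren

theorem stmt10 (m n₁ n₂ p : ℕ) (hm : 0 < m) (hn₁ : 0 < n₁) (hn₂ : 0 < n₂) (hp : 0 < p)
    (l : Fin m → Fin p)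
    (V₁ : Matrix (Fin m) (Fin n₁) ℂ) (V₂ : Matrix (Fin m) (Fin n₂) ℂ)
    (hpos : 0 < volume {ab : (Fin p → ℂ) × (Fin p → ℂ) |
      colSpan (patDiag l ab.1 * V₁) ≤ colSpan (patDiag l ab.2 * V₂)}) :
    colSpan V₁ ≤ colSpan V₂ := by
  intro x hx
  obtain ⟨c₁, rfl⟩ := hx
  set W := colSpan V₂ with hW
  set x : Fin m → ℂ := V₁.mulVecLin c₁ with hxdef
  have key : ∀ φ : Module.Dual ℂ (Fin m → ℂ), W ≤ LinearMap.ker φ → φ x = 0 := by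
    intro φ hφ
    set w : Fin m → ℂ := fun t => φ (fun j => if t = j then 1 else 0) with hw
    set G : MvPolynomial (Fin p ⊕ Fin p) ℂ :=
      ∑ t : Fin m, C (w t * x t) * X (Sum.inl (l t)) *
        ∏ q ∈ Finset.univ.erase (l t), X (Sum.inr q) with hG
    have hevalG : ∀ ab : (Fin p → ℂ) × (Fin p → ℂ),
        eval (Sum.elim ab.1 ab.2) G
          = ∑ t, w t * x t * ab.1 (l t) * ∏ q ∈ Finset.univ.erase (l t), ab.2 q := by
      intro ab
      rw [hG, map_sum]
      refine Finset.sum_congr rfl fun t _ => ?_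
      simp only [_root_.map_mul, map_prod, eval_C, eval_X]
      simp
    have hsub : {ab : (Fin p → ℂ) × (Fin p → ℂ) |
        colSpan (patDiag l ab.1 * V₁) ≤ colSpan (patDiag l ab.2 * V₂)}
        ⊆ {ab : (Fin p → ℂ) × (Fin p → ℂ) | eval (Sum.elim ab.1 ab.2) G = 0} := by
      rintro ⟨a, b⟩ hab
      have h1 : (patDiag l a * V₁).mulVecLin c₁ ∈ colSpan (patDiag l b * V₂) :=
        hab ⟨c₁, rfl⟩
      obtain ⟨c₂, hc₂⟩ := h1
      set u : Fin m → ℂ := V₂.mulVecLin c₂ with hu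
      have hu_mem : u ∈ W := ⟨c₂, rfl⟩
      have heq : ∀ t, b (l t) * u t = a (l t) * x t := by
        intro t
        have h2 := congrFun hc₂ t
        rw [Matrix.mulVecLin_apply, Matrix.mulVecLin_apply, ← Matrix.mulVec_mulVec,
          ← Matrix.mulVec_mulVec] at h2
        rw [patDiag, patDiag, Matrix.mulVec_diagonal, Matrix.mulVec_diagonal] at h2
        simpa [hu, hxdef, Matrix.mulVecLin_apply] using h2
      have hφu : ∑ t, u t * w t = 0 := by
        have h0 : φ u = 0 := hφ hu_mem
        rw [LinearMap.pi_apply_eq_sum_univ φ u] at h0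
        calc ∑ t, u t * w t
            = ∑ t, u t • φ (fun j => if t = j then 1 else 0) := rfl
          _ = 0 := h0
      show eval (Sum.elim a b) G = 0
      rw [hevalG (a, b)]
      have : ∀ t : Fin m, w t * x t * a (l t) * ∏ q ∈ Finset.univ.erase (l t), b q
          = u t * w t * ∏ q : Fin p, b q := by
        intro t
        have := heq t
        calc w t * x t * a (l t) * ∏ q ∈ Finset.univ.erase (l t), b q
            = w t * (a (l t) * x t) * ∏ q ∈ Finset.univ.erase (l t), b q := by ring
          _ = w t * (b (l t) * u t) * ∏ q ∈ Finset.univ.erase (l t), b q := by rw [heq t]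
          _ = u t * w t * (b (l t) * ∏ q ∈ Finset.univ.erase (l t), b q) := by ring
          _ = u t * w t * ∏ q : Fin p, b q := by
              rw [Finset.mul_prod_erase _ _ (Finset.mem_univ (l t))]
      rw [Finset.sum_congr rfl fun t _ => this t, ← Finset.sum_mul, hφu, zero_mul]
    have hG0 : G = 0 := by
      by_contra h
      have hz := mvpoly_zeroset_volume_zero' p G h
      have hle : volume {ab : (Fin p → ℂ) × (Fin p → ℂ) |
          colSpan (patDiag l ab.1 * V₁) ≤ colSpan (patDiag l ab.2 * V₂)} ≤
          volume {ab : (Fin p → ℂ) × (Fin p → ℂ) | eval (Sum.elim ab.1 ab.2) G = 0} :=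
        measure_mono hsub
      rw [hz] at hle
      exact absurd (le_antisymm hle zero_le) hpos.ne'
    have h1 : ∑ t, w t * x t = 0 := by
      have h2 := hevalG (fun _ => 1, fun _ => 1)
      rw [hG0] at h2
      simpa using h2.symm
    have hfin : φ x = ∑ t, w t * x t := by
      rw [LinearMap.pi_apply_eq_sum_univ φ x]
      refine Finset.sum_congr rfl fun t _ => ?_
      simp [hw, smul_eq_mul, mul_comm]
    rw [hfin, h1]
  have hQ : W.mkQ x = 0 := by
    rw [← Module.forall_dual_apply_eq_zero_iff ℂ]
    intro ψ
    have := key (ψ ∘ₗ W.mkQ) (fun y hy => by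
      simp only [LinearMap.mem_ker, LinearMap.comp_apply, Submodule.mkQ_apply]
      rw [(Submodule.Quotient.mk_eq_zero _).mpr hy, map_zero])
    simpa using this
  rwa [Submodule.mkQ_apply, Submodule.Quotient.mk_eq_zero] at hQ
end
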